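/- Let n ≥ 2 be an integer and ω ∈ ℂ a primitive n-th root of unity. Set P₁ = ∏_{i=1}^{n−1} Δ(X, ω^i) and P₂ = ∏_{i=1}^{n−1} Δ(ω^i, X) in ℂ[X]. Then the breadth of P₁ (its degree minus its trailing degree) equals 6(n−1), the breadth of P₂ is at most 2(n−1), and hence the breadth of P₁ is strictly greater than the breadth of P₂. -/

import Mathlib

open Polynomial

/-- The two-variable Alexander polynomial `Δ` of the paper, written as a
function of two elements of `ℂ[X]` so that the one-variable substitutions
`Δ(X, b)` and `Δ(a, X)` are literal instances. -/
noncomputable def Delta (x y : ℂ[X]) : ℂ[X] :=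
  x^6 + x^5*y - 2*x^5 - x^4*y + x^3*y^2 - 2*x^4 - 3*x^3*y - 2*x^2*y^2
    + x^3 - x^2*y - 2*x*y^2 + x*y + y^2

lemma Delta_monic (b : ℂ) : (Delta X (C b)).Monic := by
  unfold Delta
  monicity!

lemma Delta_natDegree (b : ℂ) : (Delta X (C b)).natDegree = 6 := by
  unfold Delta
  compute_degree!

lemma Delta_coeff_zero (b : ℂ) (hb : b ≠ 0) : (Delta X (C b)).coeff 0 ≠ 0 := by
  have : (Delta X (C b)).coeff 0 = b ^ 2 := by
    simp [Delta, coeff_zero_eq_eval_zero]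
  rw [this]
  exact pow_ne_zero _ hb

lemma Delta2_natDegree_le (a : ℂ) : (Delta (C a) X).natDegree ≤ 2 := by
  unfold Delta
  compute_degree

/-- for `n ≥ 2` and `ω` a primitive `n`-th root of unity, the
breadth of `P₁ = ∏ Δ(X, ω^i)` equals `6(n−1)`, the breadth of
`P₂ = ∏ Δ(ω^i, X)` is at most `2(n−1)`, and the former is strictly larger. -/
theorem breadth_P1_gt_breadth_P2 (n : ℕ) (hn : 2 ≤ n) (ω : ℂ)
    (hω : IsPrimitiveRoot ω n) :
    (∏ i ∈ Finset.Icc 1 (n-1), Delta X (C (ω^i))).natDegree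
      - (∏ i ∈ Finset.Icc 1 (n-1), Delta X (C (ω^i))).natTrailingDegree = 6*(n-1) ∧
    (∏ i ∈ Finset.Icc 1 (n-1), Delta (C (ω^i)) X).natDegree
      - (∏ i ∈ Finset.Icc 1 (n-1), Delta (C (ω^i)) X).natTrailingDegree ≤ 2*(n-1) ∧
    (∏ i ∈ Finset.Icc 1 (n-1), Delta (C (ω^i)) X).natDegree
      - (∏ i ∈ Finset.Icc 1 (n-1), Delta (C (ω^i)) X).natTrailingDegree
    < (∏ i ∈ Finset.Icc 1 (n-1), Delta X (C (ω^i))).natDegree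
      - (∏ i ∈ Finset.Icc 1 (n-1), Delta X (C (ω^i))).natTrailingDegree := by
  have hωne : ω ≠ 0 := hω.ne_zero (by omega)
  have hcard : (Finset.Icc 1 (n-1)).card = n - 1 := by
    rw [Nat.card_Icc]; omega
  -- P1 degree
  have hdeg1 : (∏ i ∈ Finset.Icc 1 (n-1), Delta X (C (ω^i))).natDegree = 6*(n-1) := by
    rw [Polynomial.natDegree_prod _ _ (fun i _ => (Delta_monic (ω^i)).ne_zero)]
    rw [Finset.sum_congr rfl (fun i _ => Delta_natDegree (ω^i)), Finset.sum_const, hcard]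
    ring
  -- P1 trailing
  have htr1 : (∏ i ∈ Finset.Icc 1 (n-1), Delta X (C (ω^i))).natTrailingDegree = 0 := by
    apply Polynomial.natTrailingDegree_eq_zero.mpr
    right
    rw [coeff_zero_eq_eval_zero, Polynomial.eval_prod]
    apply Finset.prod_ne_zero_iff.mpr
    intro i _
    rw [← coeff_zero_eq_eval_zero]
    exact Delta_coeff_zero _ (pow_ne_zero _ hωne)
  -- P2 degree bound
  have hdeg2 : (∏ i ∈ Finset.Icc 1 (n-1), Delta (C (ω^i)) X).natDegree ≤ 2*(n-1) := by
    refine le_trans (Polynomial.natDegree_prod_le _ _) ?_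
    calc ∑ i ∈ Finset.Icc 1 (n-1), (Delta (C (ω^i)) X).natDegree
        ≤ ∑ _i ∈ Finset.Icc 1 (n-1), 2 :=
          Finset.sum_le_sum (fun i _ => Delta2_natDegree_le (ω^i))
      _ = 2*(n-1) := by rw [Finset.sum_const, hcard]; ring
  have h2 : (∏ i ∈ Finset.Icc 1 (n-1), Delta (C (ω^i)) X).natDegree
      - (∏ i ∈ Finset.Icc 1 (n-1), Delta (C (ω^i)) X).natTrailingDegree ≤ 2*(n-1) :=
    le_trans (Nat.sub_le _ _) hdeg2
  refine ⟨by rw [hdeg1, htr1]; omega, h2, ?_⟩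
  rw [hdeg1, htr1]
  omega
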